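/- Let A be positive semidefinite with eigenvalues λ_1(A) ≥ ... ≥ λ_n(A) ≥ 0 and λ_k(A) > 0, and let g(·) = ‖·‖_(k) be the Ky Fan k-norm. Then for every X ∈ M_n(ℂ), g'_+(A,X) = max ∑_{i=1}^k Re⟨u_i, Xu_i⟩, the maximum taken over orthonormal u_1,...,u_k with Au_i = λ_i(A)u_i for all i. -/

import Mathlib

open Matrix BigOperators Finset
open scoped ComplexOrder ComplexConjugate

noncomputable def svalues {m p : ℕ} (A : Matrix (Fin m) (Fin p) ℂ) : Fin p → ℝ :=
  fun i => Real.sqrt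
    (((Matrix.isHermitian_conjTranspose_mul_self A).eigenvalues ∘
      Tuple.sort (Matrix.isHermitian_conjTranspose_mul_self A).eigenvalues) i.rev)

noncomputable def kyFan {n : ℕ} (k : ℕ) (A : Matrix (Fin n) (Fin n) ℂ) : ℝ :=
  ∑ i ∈ Finset.univ.filter (fun i : Fin n => (i : ℕ) < k), svalues A i

def ONSys {n k : ℕ} (u : Fin k → Fin n → ℂ) : Prop :=
  ∀ i j, star (u i) ⬝ᵥ u j = if i = j then 1 else 0

noncomputable def eigDesc {n : ℕ} (A : Matrix (Fin n) (Fin n) ℂ) (hA : A.IsHermitian) :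
    Fin n → ℝ :=
  (hA.eigenvalues ∘ Tuple.sort hA.eigenvalues) ∘ Fin.rev

namespace KF

variable {n k : ℕ}

lemma svalues_nonneg {m p : ℕ} (A : Matrix (Fin m) (Fin p) ℂ) (i : Fin p) :
    0 ≤ svalues A i := Real.sqrt_nonneg _

lemma svalues_antitone {m p : ℕ} (A : Matrix (Fin m) (Fin p) ℂ) : Antitone (svalues A) := by
  intro i j hij
  exact Real.sqrt_le_sqrt (Tuple.monotone_sort _ (Fin.rev_le_rev.2 hij))

lemma eigDesc_antitone (A : Matrix (Fin n) (Fin n) ℂ) (hA : A.IsHermitian) :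
    Antitone (eigDesc A hA) := by
  intro i j hij
  exact Tuple.monotone_sort _ (Fin.rev_le_rev.2 hij)

lemma eigDesc_nonneg (A : Matrix (Fin n) (Fin n) ℂ) (hA : A.PosSemidef) (i : Fin n) :
    0 ≤ eigDesc A hA.isHermitian i :=
  hA.eigenvalues_nonneg _

lemma card_filter_lt (hk : k ≤ n) :
    (Finset.univ.filter (fun i : Fin n => (i : ℕ) < k)).card = k := by
  rw [Finset.card_filter]
  rw [Fin.sum_univ_eq_sum_range (fun i => if i < k then 1 else 0)]
  have : Finset.filter (fun x => x < k) (Finset.range n) = Finset.range k := by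
    ext x; simp; omega
  rw [← Finset.card_filter, this, Finset.card_range]

lemma sum_filter_lt_eq (hk : k ≤ n) (f : Fin n → ℝ) :
    ∑ j ∈ Finset.univ.filter (fun i : Fin n => (i : ℕ) < k), f j
      = ∑ i : Fin k, f (Fin.castLE hk i) := by
  refine (Finset.sum_bij' (fun (j : Fin n) (hj : j ∈ Finset.univ.filter (fun i : Fin n => (i : ℕ) < k)) => (⟨(j : ℕ), by simpa using hj⟩ : Fin k)) (fun i _ => Fin.castLE hk i) ?_ ?_ ?_ ?_ ?_)
  · intro a ha; simp
  · intro a _; simp [Fin.ext_iff]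
  · intro a ha; simp [Fin.ext_iff]
  · intro a _; simp [Fin.ext_iff]
  · intro a ha; rfl




/-- The "slack" term in the Ky Fan rearrangement bound. -/
def slack (k : ℕ) (σ t r : Fin n → ℝ) (c : ℝ) (j : Fin n) : ℝ :=
  σ j * (t j - r j) + (if (j : ℕ) < k then (σ j - c) * (1 - t j) else (c - σ j) * t j)

lemma core_identity (hk1 : 1 ≤ k) (hk : k ≤ n) (σ t r : Fin n → ℝ)
    (htk : ∑ j, t j = k) :
    (∑ j ∈ Finset.univ.filter (fun j : Fin n => (j : ℕ) < k), σ j) - ∑ j, σ j * r j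
      = ∑ j, slack k σ t r (σ ⟨k - 1, Nat.sub_one_lt_of_le hk1 hk⟩) j := by
  classical
  set c := σ ⟨k - 1, Nat.sub_one_lt_of_le hk1 hk⟩ with hc
  set P : Fin n → Prop := fun j => (j : ℕ) < k with hP
  have key : ∀ g : Fin n → ℝ, ∑ j, g j
      = ∑ j ∈ Finset.univ.filter P, g j + ∑ j ∈ Finset.univ.filter (fun j => ¬ P j), g j :=
    fun g => (Finset.sum_filter_add_sum_filter_not _ _ _).symm
  have h4 : ∑ j ∈ Finset.univ.filter P, slack k σ t r c j
      = ∑ j ∈ Finset.univ.filter P, (σ j - σ j * r j - c + c * t j) := by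
    refine Finset.sum_congr rfl ?_
    intro j hj
    simp only [Finset.mem_filter, Finset.mem_univ, true_and, hP] at hj
    simp only [slack, if_pos hj]; ring
  have h5 : ∑ j ∈ Finset.univ.filter (fun j => ¬ P j), slack k σ t r c j
      = ∑ j ∈ Finset.univ.filter (fun j => ¬ P j), (c * t j - σ j * r j) := by
    refine Finset.sum_congr rfl ?_
    intro j hj
    simp only [Finset.mem_filter, Finset.mem_univ, true_and, hP] at hj
    simp only [slack, if_neg hj]; ring
  have hcard : (Finset.univ.filter P).card = k := by
    simpa [hP] using card_filter_lt (n := n) (k := k) hk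
  rw [key (slack k σ t r c), h4, h5]
  have e1 : ∑ j ∈ Finset.univ.filter P, (σ j - σ j * r j - c + c * t j)
      = (∑ j ∈ Finset.univ.filter P, σ j) - (∑ j ∈ Finset.univ.filter P, σ j * r j)
        - k * c + c * ∑ j ∈ Finset.univ.filter P, t j := by
    simp [Finset.sum_add_distrib, Finset.sum_sub_distrib, Finset.mul_sum, hcard]
    try ring
  have e2 : ∑ j ∈ Finset.univ.filter (fun j => ¬ P j), (c * t j - σ j * r j)
      = c * (∑ j ∈ Finset.univ.filter (fun j => ¬ P j), t j)
        - ∑ j ∈ Finset.univ.filter (fun j => ¬ P j), σ j * r j := by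
    simp [Finset.sum_sub_distrib, Finset.mul_sum]
  rw [e1, e2]
  have e3 := key t
  have e4 := key (fun j => σ j * r j)
  rw [e4]
  have e5 : c * (∑ j ∈ Finset.univ.filter P, t j)
      + c * (∑ j ∈ Finset.univ.filter (fun j => ¬ P j), t j) = c * k := by
    rw [← mul_add, ← e3, htk]
  have e6 : Finset.univ.filter (fun j : Fin n => (j : ℕ) < k) = Finset.univ.filter P := rfl
  rw [e6]
  linarith

lemma slack_nonneg (hk1 : 1 ≤ k) (hk : k ≤ n) (σ t r : Fin n → ℝ)
    (hσ0 : ∀ j, 0 ≤ σ j) (hσa : Antitone σ)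
    (ht0 : ∀ j, 0 ≤ t j) (ht1 : ∀ j, t j ≤ 1) (hrt : ∀ j, r j ≤ t j) (j : Fin n) :
    0 ≤ slack k σ t r (σ ⟨k - 1, Nat.sub_one_lt_of_le hk1 hk⟩) j := by
  by_cases hj : (j : ℕ) < k
  · have hle : σ ⟨k - 1, Nat.sub_one_lt_of_le hk1 hk⟩ ≤ σ j := hσa (by simp [Fin.le_def]; omega)
    have h1 : 0 ≤ σ j * (t j - r j) := mul_nonneg (hσ0 j) (by linarith [hrt j])
    have h2 : 0 ≤ (σ j - σ ⟨k - 1, Nat.sub_one_lt_of_le hk1 hk⟩) * (1 - t j) :=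
      mul_nonneg (by linarith) (by linarith [ht1 j])
    simp only [slack, if_pos hj]; linarith
  · have hle : σ j ≤ σ ⟨k - 1, Nat.sub_one_lt_of_le hk1 hk⟩ := hσa (by simp [Fin.le_def]; omega)
    have h1 : 0 ≤ σ j * (t j - r j) := mul_nonneg (hσ0 j) (by linarith [hrt j])
    have h2 : 0 ≤ (σ ⟨k - 1, Nat.sub_one_lt_of_le hk1 hk⟩ - σ j) * t j := mul_nonneg (by linarith) (ht0 j)
    simp only [slack, if_neg hj]; linarith

lemma core_le (hk1 : 1 ≤ k) (hk : k ≤ n) (σ t r : Fin n → ℝ)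
    (hσ0 : ∀ j, 0 ≤ σ j) (hσa : Antitone σ)
    (ht0 : ∀ j, 0 ≤ t j) (ht1 : ∀ j, t j ≤ 1) (htk : ∑ j, t j = k)
    (hrt : ∀ j, r j ≤ t j) :
    ∑ j, σ j * r j ≤ ∑ j ∈ Finset.univ.filter (fun j : Fin n => (j : ℕ) < k), σ j := by
  have := core_identity hk1 hk σ t r htk
  have h0 : 0 ≤ ∑ j, slack k σ t r (σ ⟨k - 1, Nat.sub_one_lt_of_le hk1 hk⟩) j :=
    Finset.sum_nonneg fun j _ => slack_nonneg hk1 hk σ t r hσ0 hσa ht0 ht1 hrt j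
  linarith

lemma core_eq_case (hk1 : 1 ≤ k) (hk : k ≤ n) (σ t r : Fin n → ℝ)
    (hσ0 : ∀ j, 0 ≤ σ j) (hσa : Antitone σ)
    (ht0 : ∀ j, 0 ≤ t j) (ht1 : ∀ j, t j ≤ 1) (htk : ∑ j, t j = k)
    (hrt : ∀ j, r j ≤ t j)
    (heq : ∑ j, σ j * r j = ∑ j ∈ Finset.univ.filter (fun j : Fin n => (j : ℕ) < k), σ j) :
    ∀ j : Fin n, σ j * (t j - r j) = 0
      ∧ ((j : ℕ) < k → (σ j - σ ⟨k - 1, Nat.sub_one_lt_of_le hk1 hk⟩) * (1 - t j) = 0)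
      ∧ (¬ (j : ℕ) < k → (σ ⟨k - 1, Nat.sub_one_lt_of_le hk1 hk⟩ - σ j) * t j = 0) := by
  have hid := core_identity hk1 hk σ t r htk
  rw [heq] at hid
  have hzero : ∀ j ∈ Finset.univ, slack k σ t r (σ ⟨k - 1, Nat.sub_one_lt_of_le hk1 hk⟩) j = 0 :=
    (Finset.sum_eq_zero_iff_of_nonneg
      (fun j _ => slack_nonneg hk1 hk σ t r hσ0 hσa ht0 ht1 hrt j)).1 (by linarith)
  intro j
  have hz := hzero j (Finset.mem_univ j)
  have h1 : 0 ≤ σ j * (t j - r j) := mul_nonneg (hσ0 j) (by linarith [hrt j])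
  by_cases hj : (j : ℕ) < k
  · have hle : σ ⟨k - 1, Nat.sub_one_lt_of_le hk1 hk⟩ ≤ σ j := hσa (by simp [Fin.le_def]; omega)
    have h2 : 0 ≤ (σ j - σ ⟨k - 1, Nat.sub_one_lt_of_le hk1 hk⟩) * (1 - t j) :=
      mul_nonneg (by linarith) (by linarith [ht1 j])
    simp only [slack, if_pos hj] at hz
    exact ⟨by linarith, fun _ => by linarith, fun h => absurd hj h⟩
  · have hle : σ j ≤ σ ⟨k - 1, Nat.sub_one_lt_of_le hk1 hk⟩ := hσa (by simp [Fin.le_def]; omega)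
    have h2 : 0 ≤ (σ ⟨k - 1, Nat.sub_one_lt_of_le hk1 hk⟩ - σ j) * t j := mul_nonneg (by linarith) (ht0 j)
    simp only [slack, if_neg hj] at hz
    exact ⟨by linarith, fun h => absurd h hj, fun _ => by linarith⟩




abbrev Eu (n : ℕ) := EuclideanSpace ℂ (Fin n)

lemma inner_eq {n : ℕ} (x y : Fin n → ℂ) :
    (inner (𝕜 := ℂ) (E := Eu n) (WithLp.toLp 2 x) (WithLp.toLp 2 y)) = star x ⬝ᵥ y := by
  rw [EuclideanSpace.inner_toLp_toLp, dotProduct_comm]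

lemma inner_sdp {n : ℕ} (x y : Eu n) :
    (inner (𝕜 := ℂ) x y) = star (WithLp.ofLp x) ⬝ᵥ WithLp.ofLp y := by
  rw [EuclideanSpace.inner_eq_star_dotProduct, dotProduct_comm]

lemma inner_equiv_symm {n : ℕ} (x y : Fin n → ℂ) :
    (inner (𝕜 := ℂ) ((WithLp.equiv 2 (Fin n → ℂ)).symm x) ((WithLp.equiv 2 (Fin n → ℂ)).symm y))
      = star x ⬝ᵥ y := inner_eq x y

lemma dot_conj {n : ℕ} (x y : Fin n → ℂ) : star x ⬝ᵥ y = conj (star y ⬝ᵥ x) := by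
  simp only [dotProduct, map_sum, _root_.map_mul, Pi.star_apply, RCLike.star_def, RingHomCompTriple.comp_apply]
  simp [mul_comm]

/-- descending eigenbasis -/
noncomputable def eframe {n : ℕ} (A : Matrix (Fin n) (Fin n) ℂ) (hA : A.IsHermitian) :
    OrthonormalBasis (Fin n) ℂ (Eu n) :=
  hA.eigenvectorBasis.reindex ((Fin.revPerm.trans (Tuple.sort hA.eigenvalues)).symm)

lemma eframe_apply {n : ℕ} (A : Matrix (Fin n) (Fin n) ℂ) (hA : A.IsHermitian) (j : Fin n) :
    eframe A hA j = hA.eigenvectorBasis (Tuple.sort hA.eigenvalues j.rev) := by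
  simp [eframe, OrthonormalBasis.reindex_apply]

lemma mulVec_eframe {n : ℕ} (A : Matrix (Fin n) (Fin n) ℂ) (hA : A.IsHermitian) (j : Fin n) :
    A *ᵥ ⇑(eframe A hA j) = ((eigDesc A hA j : ℝ) : ℂ) • ⇑(eframe A hA j) := by
  rw [eframe_apply]
  have := hA.mulVec_eigenvectorBasis (Tuple.sort hA.eigenvalues j.rev)
  rw [this]
  funext l
  simp [eigDesc, Complex.real_smul]

lemma exists_frame {n : ℕ} (M : Matrix (Fin n) (Fin n) ℂ) :
    ∃ w z : OrthonormalBasis (Fin n) ℂ (Eu n),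
      ∀ j, M *ᵥ ⇑(z j) = ((svalues M j : ℝ) : ℂ) • ⇑(w j) := by
  classical
  set h := Matrix.isHermitian_conjTranspose_mul_self M with hh
  set z : OrthonormalBasis (Fin n) ℂ (Eu n) :=
    h.eigenvectorBasis.reindex ((Fin.revPerm.trans (Tuple.sort h.eigenvalues)).symm) with hz
  have hzval : ∀ j, (Mᴴ * M) *ᵥ ⇑(z j) = ((svalues M j : ℝ)^2 : ℝ) • ⇑(z j) := by
    intro j
    have h1 : z j = h.eigenvectorBasis (Tuple.sort h.eigenvalues j.rev) := by
      simp [hz, OrthonormalBasis.reindex_apply]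
    have h2 := h.mulVec_eigenvectorBasis (Tuple.sort h.eigenvalues j.rev)
    rw [h1, h2]
    have h3 : svalues M j ^ 2 = h.eigenvalues (Tuple.sort h.eigenvalues j.rev) := by
      rw [svalues]
      exact Real.sq_sqrt ((Matrix.posSemidef_conjTranspose_mul_self M).eigenvalues_nonneg _)
    rw [h3]
  -- dot products with M applied
  have hdot : ∀ j j' : Fin n, star (M *ᵥ ⇑(z j)) ⬝ᵥ (M *ᵥ ⇑(z j'))
      = ((svalues M j' : ℝ)^2 : ℂ) * (if j = j' then 1 else 0) := by
    intro j j'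
    rw [star_mulVec, ← Matrix.dotProduct_mulVec, Matrix.mulVec_mulVec, hzval j']
    have horth : (inner (𝕜 := ℂ) (E := Eu n) (z j) (z j')) = if j = j' then 1 else 0 :=
      orthonormal_iff_ite.mp z.orthonormal j j'
    rw [dotProduct_smul, ← inner_sdp, horth]
    simp [Complex.real_smul]
  set s : Set (Fin n) := {j | svalues M j ≠ 0} with hs
  set v₀ : Fin n → Eu n := fun j => (((svalues M j)⁻¹ : ℝ) : ℂ) • WithLp.toLp 2 (M *ᵥ ⇑(z j)) with hv₀
  have hon : Orthonormal ℂ (s.restrict v₀) := by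
    rw [orthonormal_iff_ite]
    intro i j
    have hi : svalues M (i : Fin n) ≠ 0 := i.2
    have hj : svalues M (j : Fin n) ≠ 0 := j.2
    have : (inner (𝕜 := ℂ) (E := Eu n) (v₀ i) (v₀ j)) =
        conj (((svalues M (i:Fin n))⁻¹ : ℝ) : ℂ) * (((svalues M (j:Fin n))⁻¹ : ℝ) : ℂ) *
          (star (M *ᵥ ⇑(z i)) ⬝ᵥ (M *ᵥ ⇑(z j))) := by
      simp only [hv₀, inner_smul_left, inner_smul_right, inner_eq]
      ring
    rw [show s.restrict v₀ i = v₀ i from rfl, show s.restrict v₀ j = v₀ j from rfl, this, hdot]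
    by_cases hij : (i : Fin n) = (j : Fin n)
    · have : i = j := Subtype.ext hij
      simp [this, Complex.conj_ofReal]
      have hne : ((svalues M (j : Fin n) : ℝ) : ℂ) ≠ 0 := by exact_mod_cast hj
      push_cast
      field_simp
    · have : ¬ (i = j) := fun hc => hij (congrArg _ hc)
      simp [hij, this]
  obtain ⟨w, hw⟩ := hon.exists_orthonormalBasis_extension_of_card_eq
    (by simp [finrank_euclideanSpace]) (v := v₀) (s := s)
  refine ⟨w, z, ?_⟩
  intro j
  by_cases hj : svalues M j = 0
  · have hzero : M *ᵥ ⇑(z j) = 0 := by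
      have := hdot j j
      simp [hj] at this
      exact this
    rw [hzero, hj]
    simp
  · have := hw j hj
    have hexp : ⇑(w j) = (((svalues M j)⁻¹ : ℝ) : ℂ) • (M *ᵥ ⇑(z j)) := by
      rw [this]; rfl
    rw [hexp, smul_smul, ← Complex.ofReal_mul]
    field_simp
    simp

noncomputable def val {n k : ℕ} (M : Matrix (Fin n) (Fin n) ℂ) (u v : Fin k → Fin n → ℂ) : ℝ :=
  ∑ i, (star (u i) ⬝ᵥ (M *ᵥ v i)).re

/-- coefficient of `u i` against basis vector `w j` -/
noncomputable def coef {n k : ℕ} (w : OrthonormalBasis (Fin n) ℂ (Eu n))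
    (u : Fin k → Fin n → ℂ) (i : Fin k) (j : Fin n) : ℂ :=
  star (⇑(w j) : Fin n → ℂ) ⬝ᵥ u i

lemma normSq_sub_identity (a b : ℂ) :
    Complex.normSq (a - b) = Complex.normSq a + Complex.normSq b - 2 * (conj a * b).re := by
  simp [Complex.normSq_apply, Complex.sub_re, Complex.sub_im, Complex.mul_re, Complex.mul_im]
  ring

lemma dotProduct_sumr {n : ℕ} (x : Fin n → ℂ) (f : Fin n → Fin n → ℂ) :
    x ⬝ᵥ (∑ j, f j) = ∑ j, x ⬝ᵥ f j := by
  simp only [dotProduct, Finset.sum_apply, Finset.mul_sum]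
  exact Finset.sum_comm

lemma mulVec_sumr {n : ℕ} {κ : Type*} [Fintype κ] (M : Matrix (Fin n) (Fin n) ℂ)
    (f : κ → Fin n → ℂ) :
    M *ᵥ (∑ j, f j) = ∑ j, M *ᵥ f j := by
  simpa only [Matrix.mulVecLin_apply] using map_sum (Matrix.mulVecLin M) f Finset.univ

lemma coef_bessel {n k : ℕ} {u : Fin k → Fin n → ℂ} (hu : ONSys u)
    (w : OrthonormalBasis (Fin n) ℂ (Eu n)) (j : Fin n) :
    ∑ i, Complex.normSq (coef w u i j) ≤ 1 := by
  have hon : Orthonormal ℂ (fun i => (WithLp.equiv 2 (Fin n → ℂ)).symm (u i)) := by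
    rw [orthonormal_iff_ite]
    intro i j
    rw [inner_equiv_symm]
    exact hu i j
  have hb := hon.sum_inner_products_le (s := Finset.univ) (w j)
  have hterm : ∀ i, ‖(inner (𝕜 := ℂ) ((WithLp.equiv 2 (Fin n → ℂ)).symm (u i)) (w j))‖ ^ 2
      = Complex.normSq (coef w u i j) := by
    intro i
    have : (inner (𝕜 := ℂ) ((WithLp.equiv 2 (Fin n → ℂ)).symm (u i)) (w j))
        = conj (coef w u i j) := by
      rw [inner_sdp]
      simp only [WithLp.equiv_symm_apply, WithLp.ofLp_toLp]
      rw [coef, dot_conj]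
    rw [this]
    rw [Complex.sq_norm, Complex.normSq_conj]
  rw [Finset.sum_congr rfl (fun i _ => hterm i)] at hb
  have hw : ‖w j‖ = 1 := w.orthonormal.1 j
  rw [hw] at hb
  simpa using hb

lemma coef_parseval {n k : ℕ} {u : Fin k → Fin n → ℂ} (hu : ONSys u)
    (w : OrthonormalBasis (Fin n) ℂ (Eu n)) (i : Fin k) :
    ∑ j, Complex.normSq (coef w u i j) = 1 := by
  have hp := w.sum_inner_mul_inner ((WithLp.equiv 2 (Fin n → ℂ)).symm (u i))
    ((WithLp.equiv 2 (Fin n → ℂ)).symm (u i))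
  have hterm : ∀ j, (inner (𝕜 := ℂ) ((WithLp.equiv 2 (Fin n → ℂ)).symm (u i)) (w j))
      * (inner (𝕜 := ℂ) (w j) ((WithLp.equiv 2 (Fin n → ℂ)).symm (u i)))
      = (Complex.normSq (coef w u i j) : ℂ) := by
    intro j
    have h1 : (inner (𝕜 := ℂ) (w j) ((WithLp.equiv 2 (Fin n → ℂ)).symm (u i)))
        = coef w u i j := by
      rw [inner_sdp]
      simp only [WithLp.equiv_symm_apply, WithLp.ofLp_toLp]
      rfl
    have h2 : (inner (𝕜 := ℂ) ((WithLp.equiv 2 (Fin n → ℂ)).symm (u i)) (w j))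
        = conj (coef w u i j) := by
      rw [inner_sdp]
      simp only [WithLp.equiv_symm_apply, WithLp.ofLp_toLp]
      rw [coef, dot_conj]
    rw [h1, h2, Complex.normSq_eq_conj_mul_self]
  rw [Finset.sum_congr rfl (fun j _ => hterm j), inner_equiv_symm,
    hu i i] at hp
  simp only [if_pos rfl] at hp
  have := congrArg Complex.re hp
  simpa using this

lemma val_expand {n k : ℕ} (M : Matrix (Fin n) (Fin n) ℂ) (σ : Fin n → ℝ)
    (w z : OrthonormalBasis (Fin n) ℂ (Eu n))
    (hf : ∀ j, M *ᵥ ⇑(z j) = ((σ j : ℝ) : ℂ) • ⇑(w j)) (u v : Fin k → Fin n → ℂ) :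
    val M u v = ∑ j, σ j * (∑ i, (conj (coef w u i j) * coef z v i j).re) := by
  have key : ∀ i, star (u i) ⬝ᵥ (M *ᵥ v i)
      = ∑ j, ((σ j : ℂ) * (conj (coef w u i j) * coef z v i j)) := by
    intro i
    have hv : ∑ j, (coef z v i j) • (⇑(z j) : Fin n → ℂ) = v i := by
      have h := congrArg WithLp.ofLp (z.sum_repr' (WithLp.toLp 2 (v i)))
      simpa [WithLp.ofLp_sum, WithLp.ofLp_smul, WithLp.ofLp_toLp, inner_sdp, coef] using h
    conv_lhs => rw [← hv]
    rw [mulVec_sumr]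
    have hfj : ∀ j, M *ᵥ ((coef z v i j) • (⇑(z j) : Fin n → ℂ))
        = (coef z v i j) • (((σ j : ℝ) : ℂ) • (⇑(w j) : Fin n → ℂ)) := by
      intro j
      rw [Matrix.mulVec_smul, hf j]
    rw [Finset.sum_congr rfl (fun j _ => hfj j), dotProduct_sumr]
    refine Finset.sum_congr rfl ?_
    intro j _
    rw [dotProduct_smul, dotProduct_smul]
    have : star (u i) ⬝ᵥ (⇑(w j) : Fin n → ℂ) = conj (coef w u i j) := by
      rw [coef, dot_conj]
    rw [this]
    simp only [smul_eq_mul]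
    ring
  rw [val]
  rw [Finset.sum_congr rfl (fun i (_ : i ∈ Finset.univ) => congrArg Complex.re (key i))]
  have hre : ∀ i, (∑ j, ((σ j : ℂ) * (conj (coef w u i j) * coef z v i j))).re
      = ∑ j, σ j * (conj (coef w u i j) * coef z v i j).re := by
    intro i
    rw [Complex.re_sum]
    exact Finset.sum_congr rfl fun j _ => by rw [Complex.re_ofReal_mul]
  rw [Finset.sum_congr rfl (fun i (_ : i ∈ Finset.univ) => hre i), Finset.sum_comm]
  exact Finset.sum_congr rfl fun j _ => by rw [Finset.mul_sum]

/-- The general Ky Fan inequality packaged with its "core" data. -/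
lemma val_le_core {n k : ℕ} (hk1 : 1 ≤ k) (hk : k ≤ n) (M : Matrix (Fin n) (Fin n) ℂ)
    (σ : Fin n → ℝ) (hσ0 : ∀ j, 0 ≤ σ j) (hσa : Antitone σ)
    (w z : OrthonormalBasis (Fin n) ℂ (Eu n))
    (hf : ∀ j, M *ᵥ ⇑(z j) = ((σ j : ℝ) : ℂ) • ⇑(w j))
    (u v : Fin k → Fin n → ℂ) (hu : ONSys u) (hv : ONSys v) :
    val M u v ≤ ∑ j ∈ Finset.univ.filter (fun j : Fin n => (j : ℕ) < k), σ j := by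
  rw [val_expand M σ w z hf u v]
  set t : Fin n → ℝ := fun j =>
    ((∑ i, Complex.normSq (coef w u i j)) + (∑ i, Complex.normSq (coef z v i j))) / 2 with ht
  set r : Fin n → ℝ := fun j => ∑ i, (conj (coef w u i j) * coef z v i j).re with hr
  have hrt : ∀ j, r j ≤ t j := by
    intro j
    rw [ht, hr]
    have : ∀ i, (conj (coef w u i j) * coef z v i j).re
        ≤ (Complex.normSq (coef w u i j) + Complex.normSq (coef z v i j)) / 2 := by
      intro i
      have h0 : 0 ≤ Complex.normSq (coef w u i j - coef z v i j) := Complex.normSq_nonneg _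
      rw [normSq_sub_identity] at h0
      linarith
    calc ∑ i, (conj (coef w u i j) * coef z v i j).re
        ≤ ∑ i, (Complex.normSq (coef w u i j) + Complex.normSq (coef z v i j)) / 2 :=
          Finset.sum_le_sum fun i _ => this i
      _ = t j := by rw [ht]; rw [← Finset.sum_div, Finset.sum_add_distrib]
  have ht0 : ∀ j, 0 ≤ t j := by
    intro j
    rw [ht]
    have h1 : (0:ℝ) ≤ ∑ i, Complex.normSq (coef w u i j) :=
      Finset.sum_nonneg fun i _ => Complex.normSq_nonneg _
    have h2 : (0:ℝ) ≤ ∑ i, Complex.normSq (coef z v i j) :=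
      Finset.sum_nonneg fun i _ => Complex.normSq_nonneg _
    positivity
  have ht1 : ∀ j, t j ≤ 1 := by
    intro j
    rw [ht]
    have h1 := coef_bessel hu w j
    have h2 := coef_bessel hv z j
    linarith
  have htk : ∑ j, t j = k := by
    rw [ht]
    rw [← Finset.sum_div, Finset.sum_add_distrib]
    have h1 : ∑ j : Fin n, ∑ i : Fin k, Complex.normSq (coef w u i j) = (k : ℝ) := by
      rw [Finset.sum_comm, Finset.sum_congr rfl (fun i (_ : i ∈ Finset.univ) => coef_parseval hu w i)]
      simp
    have h2 : ∑ j : Fin n, ∑ i : Fin k, Complex.normSq (coef z v i j) = (k : ℝ) := by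
      rw [Finset.sum_comm, Finset.sum_congr rfl (fun i (_ : i ∈ Finset.univ) => coef_parseval hv z i)]
      simp
    rw [h1, h2]
    ring
  have hcore := core_le hk1 hk σ t r hσ0 hσa ht0 ht1 htk hrt
  calc ∑ j, σ j * (∑ i, (conj (coef w u i j) * coef z v i j).re)
      = ∑ j, σ j * r j := by rw [hr]
    _ ≤ _ := hcore

theorem val_le_kyFan {n k : ℕ} (hk1 : 1 ≤ k) (hk : k ≤ n) (M : Matrix (Fin n) (Fin n) ℂ)
    {u v : Fin k → Fin n → ℂ} (hu : ONSys u) (hv : ONSys v) :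
    val M u v ≤ kyFan k M := by
  obtain ⟨w, z, hf⟩ := exists_frame M
  exact val_le_core hk1 hk M (svalues M) (svalues_nonneg M) (svalues_antitone M) w z hf u v hu hv

theorem herm_val_le {n k : ℕ} (hk1 : 1 ≤ k) (hk : k ≤ n) (A : Matrix (Fin n) (Fin n) ℂ)
    (hA : A.PosSemidef) {u v : Fin k → Fin n → ℂ} (hu : ONSys u) (hv : ONSys v) :
    val A u v ≤ ∑ j ∈ Finset.univ.filter (fun j : Fin n => (j : ℕ) < k),
      eigDesc A hA.isHermitian j :=
  val_le_core hk1 hk A (eigDesc A hA.isHermitian) (eigDesc_nonneg A hA)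
    (eigDesc_antitone A hA.isHermitian) (eframe A hA.isHermitian) (eframe A hA.isHermitian)
    (mulVec_eframe A hA.isHermitian) u v hu hv

lemma onsys_of_basis {n k : ℕ} (hk : k ≤ n) (w : OrthonormalBasis (Fin n) ℂ (Eu n)) :
    ONSys (fun i : Fin k => (⇑(w (Fin.castLE hk i)) : Fin n → ℂ)) := by
  intro i j
  have := orthonormal_iff_ite.mp w.orthonormal (Fin.castLE hk i) (Fin.castLE hk j)
  rw [inner_sdp] at this
  simp only [show (Fin.castLE hk i = Fin.castLE hk j) ↔ (i = j) from
    ⟨fun h => Fin.castLE_injective hk h, fun h => h ▸ rfl⟩] at this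
  exact this

theorem exists_attain {n k : ℕ} (hk1 : 1 ≤ k) (hk : k ≤ n) (M : Matrix (Fin n) (Fin n) ℂ) :
    ∃ u v : Fin k → Fin n → ℂ, ONSys u ∧ ONSys v ∧ val M u v = kyFan k M := by
  obtain ⟨w, z, hf⟩ := exists_frame M
  refine ⟨fun i => ⇑(w (Fin.castLE hk i)), fun i => ⇑(z (Fin.castLE hk i)),
    onsys_of_basis hk w, onsys_of_basis hk z, ?_⟩
  have hterm : ∀ i : Fin k,
      (star (⇑(w (Fin.castLE hk i)) : Fin n → ℂ) ⬝ᵥ (M *ᵥ ⇑(z (Fin.castLE hk i)))).re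
        = svalues M (Fin.castLE hk i) := by
    intro i
    rw [hf (Fin.castLE hk i), dotProduct_smul]
    have := orthonormal_iff_ite.mp w.orthonormal (Fin.castLE hk i) (Fin.castLE hk i)
    rw [inner_sdp] at this
    rw [this]
    simp
  rw [val, Finset.sum_congr rfl (fun i (_ : i ∈ Finset.univ) => hterm i), kyFan,
    sum_filter_lt_eq hk]

lemma sumr_dotProduct {n : ℕ} {κ : Type*} [Fintype κ] (f : κ → Fin n → ℂ) (x : Fin n → ℂ) :
    (∑ j, f j) ⬝ᵥ x = ∑ j, f j ⬝ᵥ x := by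
  simp only [dotProduct, Finset.sum_apply, Finset.sum_mul]
  exact Finset.sum_comm

lemma dotProduct_sumr' {n : ℕ} {κ : Type*} [Fintype κ] (x : Fin n → ℂ) (f : κ → Fin n → ℂ) :
    x ⬝ᵥ (∑ j, f j) = ∑ j, x ⬝ᵥ f j := by
  simp only [dotProduct, Finset.sum_apply, Finset.mul_sum]
  exact Finset.sum_comm

lemma onsys_orthonormal {n k : ℕ} {u : Fin k → Fin n → ℂ} (hu : ONSys u) :
    Orthonormal ℂ (fun i => (WithLp.equiv 2 (Fin n → ℂ)).symm (u i)) := by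
  rw [orthonormal_iff_ite]
  intro i j
  rw [inner_equiv_symm]
  exact hu i j

lemma mem_span_of_parseval {k : ℕ} {E : Type*} [NormedAddCommGroup E] [InnerProductSpace ℂ E]
    {f : Fin k → E} (hf : Orthonormal ℂ f) (x : E)
    (h : ∑ i, Complex.normSq (inner (𝕜 := ℂ) (f i) x) = ‖x‖ ^ 2) :
    x ∈ Submodule.span ℂ (Set.range f) := by
  set y := ∑ i, (inner (𝕜 := ℂ) (f i) x) • f i with hy
  have hymem : y ∈ Submodule.span ℂ (Set.range f) :=
    Submodule.sum_mem _ fun i _ => Submodule.smul_mem _ _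
      (Submodule.subset_span (Set.mem_range_self i))
  have hyy : (inner (𝕜 := ℂ) y y) = (∑ i, Complex.normSq (inner (𝕜 := ℂ) (f i) x) : ℝ) := by
    rw [hy, hf.inner_sum]
    push_cast
    exact Finset.sum_congr rfl fun i _ => (Complex.normSq_eq_conj_mul_self).symm ▸ rfl
  have hxy : (inner (𝕜 := ℂ) x y) = (∑ i, Complex.normSq (inner (𝕜 := ℂ) (f i) x) : ℝ) := by
    rw [hy, inner_sum]
    push_cast
    refine Finset.sum_congr rfl fun i _ => ?_
    rw [inner_smul_right, ← inner_conj_symm x (f i)]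
    exact Complex.mul_conj _
  have hyx : (inner (𝕜 := ℂ) y x) = (∑ i, Complex.normSq (inner (𝕜 := ℂ) (f i) x) : ℝ) := by
    rw [hy, sum_inner]
    push_cast
    refine Finset.sum_congr rfl fun i _ => ?_
    rw [inner_smul_left, Complex.normSq_eq_conj_mul_self]
  have hzero : (inner (𝕜 := ℂ) (x - y) (x - y)) = 0 := by
    rw [inner_sub_sub_self, hyy, hxy, hyx]
    have hxx : (inner (𝕜 := ℂ) x x) = (‖x‖ ^ 2 : ℝ) := by
      rw [inner_self_eq_norm_sq_to_K]
      norm_cast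
    rw [hxx, ← h]
    push_cast
    ring
  have : x - y = 0 := inner_self_eq_zero.mp hzero
  have : x = y := by rwa [sub_eq_zero] at this
  rw [this]; exact hymem

lemma val_eq_of_span {n k : ℕ} (X : Matrix (Fin n) (Fin n) ℂ)
    {u w : Fin k → Fin n → ℂ} (hu : ONSys u) (hw : ONSys w)
    (hmem : ∀ i, (WithLp.equiv 2 (Fin n → ℂ)).symm (w i) ∈
      Submodule.span ℂ (Set.range (fun l => (WithLp.equiv 2 (Fin n → ℂ)).symm (u l)))) :
    val X w w = val X u u := by
  classical
  set C : Fin k → Fin k → ℂ := fun i l => star (u l) ⬝ᵥ w i with hC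
  have hrepr : ∀ i, w i = ∑ l, C i l • u l := by
    intro i
    obtain ⟨d, hd⟩ := (Submodule.mem_span_range_iff_exists_fun ℂ).1 (hmem i)
    have hd' : ∑ l, d l • u l = w i := by
      have h := congrArg WithLp.ofLp hd
      simpa [WithLp.ofLp_sum, WithLp.ofLp_smul, WithLp.ofLp_toLp] using h
    have hdC : ∀ l, C i l = d l := by
      intro l
      rw [hC]
      simp only
      rw [← hd', dotProduct_sumr']
      rw [Finset.sum_congr rfl (fun m (_ : m ∈ Finset.univ) => dotProduct_smul (d m) (star (u l)) (u m))]
      simp only [smul_eq_mul, hu l]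
      simp [Finset.sum_ite_eq']
    rw [← hd']
    exact Finset.sum_congr rfl fun l _ => by rw [hdC l]
  have hCC : ∀ i j, ∑ l, conj (C i l) * C j l = if i = j then 1 else 0 := by
    intro i j
    have := hw i j
    rw [hrepr i, hrepr j] at this
    rw [star_sum] at this
    rw [Finset.sum_congr rfl (fun l (_ : l ∈ Finset.univ) => star_smul (C i l) (u l))] at this
    rw [sumr_dotProduct] at this
    have hterm : ∀ l, (star (C i l) • star (u l)) ⬝ᵥ (∑ m, C j m • u m)
        = conj (C i l) * C j l := by
      intro l
      rw [dotProduct_sumr']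
      have h1 : ∀ m, (star (C i l) • star (u l)) ⬝ᵥ (C j m • u m)
          = conj (C i l) * (C j m * (if l = m then 1 else 0)) := by
        intro m
        rw [dotProduct_smul, smul_dotProduct]
        simp only [smul_eq_mul, RCLike.star_def]
        rw [hu l m]
        ring
      rw [Finset.sum_congr rfl (fun m (_ : m ∈ Finset.univ) => h1 m)]
      simp [Finset.mul_sum, mul_ite, Finset.sum_ite_eq]
    rw [Finset.sum_congr rfl (fun l (_ : l ∈ Finset.univ) => hterm l)] at this
    exact this
  -- matrix identity
  set Cm : Matrix (Fin k) (Fin k) ℂ := Matrix.of (fun i l => C i l) with hCm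
  have hCm1 : Cm * Cmᴴ = 1 := by
    ext a b
    rw [Matrix.mul_apply]
    have key : ∑ l, Cm a l * (Cmᴴ) l b = ∑ l, conj (C b l) * C a l := by
      refine Finset.sum_congr rfl fun l _ => ?_
      rw [Matrix.conjTranspose_apply]
      simp only [hCm, Matrix.of_apply, RCLike.star_def]
      ring
    rw [key, hCC b a]
    by_cases hab : a = b <;> simp [hab, Matrix.one_apply, eq_comm]
  have hCm2 : Cmᴴ * Cm = 1 := mul_eq_one_comm.mp hCm1
  have hcols : ∀ l m : Fin k, ∑ i, conj (C i l) * C i m = if l = m then 1 else 0 := by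
    intro l m
    have := congrFun (congrFun hCm2 l) m
    rw [Matrix.mul_apply] at this
    simp only [Matrix.conjTranspose_apply, Matrix.one_apply] at this
    rw [← this]
    refine Finset.sum_congr rfl fun i _ => ?_
    rfl
  -- main computation at complex level
  have hmain : (∑ i, star (w i) ⬝ᵥ (X *ᵥ w i)) = ∑ l, star (u l) ⬝ᵥ (X *ᵥ u l) := by
    have hterm : ∀ i, star (w i) ⬝ᵥ (X *ᵥ w i)
        = ∑ l, ∑ m, conj (C i l) * C i m * (star (u l) ⬝ᵥ (X *ᵥ u m)) := by
      intro i
      rw [hrepr i, star_sum]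
      rw [Finset.sum_congr rfl (fun l (_ : l ∈ Finset.univ) => star_smul (C i l) (u l))]
      rw [sumr_dotProduct]
      refine Finset.sum_congr rfl fun l _ => ?_
      rw [show X *ᵥ (∑ m, C i m • u m) = ∑ m, C i m • (X *ᵥ u m) by
        rw [mulVec_sumr]
        exact Finset.sum_congr rfl fun m _ => Matrix.mulVec_smul X (C i m) (u m)]
      rw [dotProduct_sumr']
      refine Finset.sum_congr rfl fun m _ => ?_
      rw [dotProduct_smul, smul_dotProduct]
      simp only [smul_eq_mul, RCLike.star_def]
      ring
    rw [Finset.sum_congr rfl (fun i (_ : i ∈ Finset.univ) => hterm i)]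
    rw [Finset.sum_comm]
    have : ∀ l, ∑ i, ∑ m, conj (C i l) * C i m * (star (u l) ⬝ᵥ (X *ᵥ u m))
        = ∑ m, (∑ i, conj (C i l) * C i m) * (star (u l) ⬝ᵥ (X *ᵥ u m)) := by
      intro l
      rw [Finset.sum_comm]
      exact Finset.sum_congr rfl fun m _ => by rw [Finset.sum_mul]
    rw [Finset.sum_congr rfl (fun l (_ : l ∈ Finset.univ) => this l)]
    refine Finset.sum_congr rfl fun l _ => ?_
    have hfin : ∀ m, (∑ i, conj (C i l) * C i m) * (star (u l) ⬝ᵥ (X *ᵥ u m))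
        = (if l = m then 1 else 0) * (star (u l) ⬝ᵥ (X *ᵥ u m)) := by
      intro m; rw [hcols l m]
    rw [Finset.sum_congr rfl (fun m (_ : m ∈ Finset.univ) => hfin m)]
    simp [Finset.sum_ite_eq]
  rw [val, val, ← Complex.re_sum, ← Complex.re_sum, hmain]

lemma coef_inner {n k : ℕ} (w : OrthonormalBasis (Fin n) ℂ (Eu n))
    (u : Fin k → Fin n → ℂ) (i : Fin k) (j : Fin n) :
    (inner (𝕜 := ℂ) (w j) ((WithLp.equiv 2 (Fin n → ℂ)).symm (u i))) = coef w u i j := by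
  rw [inner_sdp]
  simp only [WithLp.equiv_symm_apply, WithLp.ofLp_toLp]
  rfl

set_option maxHeartbeats 1000000 in
theorem equality_case {n k : ℕ} (hk1 : 1 ≤ k) (hk : k ≤ n)
    (A : Matrix (Fin n) (Fin n) ℂ) (hA : A.PosSemidef)
    (hpos : 0 < eigDesc A hA.isHermitian ⟨k - 1, Nat.sub_one_lt_of_le hk1 hk⟩)
    (X : Matrix (Fin n) (Fin n) ℂ)
    {u v : Fin k → Fin n → ℂ} (hu : ONSys u) (hv : ONSys v)
    (heq : val A u v = ∑ j ∈ Finset.univ.filter (fun j : Fin n => (j : ℕ) < k),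
      eigDesc A hA.isHermitian j) :
    ∃ w : Fin k → Fin n → ℂ, ONSys w ∧
      (∀ i : Fin k, A *ᵥ w i = ((eigDesc A hA.isHermitian (Fin.castLE hk i) : ℝ) : ℂ) • w i) ∧
      val X w w = val X u v := by
  classical
  set lam := eigDesc A hA.isHermitian with hlam
  set e := eframe A hA.isHermitian with he
  set α := coef e u with hα
  set β := coef e v with hβ
  set c := lam ⟨k - 1, Nat.sub_one_lt_of_le hk1 hk⟩ with hc
  have hcpos : 0 < c := hpos
  set p : Fin n → ℝ := fun j => ∑ i, Complex.normSq (α i j) with hp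
  set q : Fin n → ℝ := fun j => ∑ i, Complex.normSq (β i j) with hq
  set t : Fin n → ℝ := fun j => (p j + q j) / 2 with ht
  set r : Fin n → ℝ := fun j => ∑ i, (conj (α i j) * β i j).re with hr
  have hp1 : ∀ j, p j ≤ 1 := fun j => coef_bessel hu e j
  have hq1 : ∀ j, q j ≤ 1 := fun j => coef_bessel hv e j
  have hp0 : ∀ j, 0 ≤ p j := fun j => Finset.sum_nonneg fun i _ => Complex.normSq_nonneg _
  have hq0 : ∀ j, 0 ≤ q j := fun j => Finset.sum_nonneg fun i _ => Complex.normSq_nonneg _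
  have htdef : ∀ j, t j = (p j + q j) / 2 := fun _ => rfl
  have hpdef : ∀ j, p j = ∑ i, Complex.normSq (α i j) := fun _ => rfl
  have hqdef : ∀ j, q j = ∑ i, Complex.normSq (β i j) := fun _ => rfl
  have hrdef : ∀ j, r j = ∑ i, (conj (α i j) * β i j).re := fun _ => rfl
  have hrt : ∀ j, r j ≤ t j := by
    intro j
    have hterm : ∀ i, (conj (α i j) * β i j).re
        ≤ (Complex.normSq (α i j) + Complex.normSq (β i j)) / 2 := by
      intro i
      have h0 : 0 ≤ Complex.normSq (α i j - β i j) := Complex.normSq_nonneg _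
      rw [normSq_sub_identity] at h0
      linarith
    have hsum := Finset.sum_le_sum (fun i (_ : i ∈ Finset.univ) => hterm i)
    rw [hrdef j, htdef j, hpdef j, hqdef j]
    refine le_trans hsum (le_of_eq ?_)
    rw [← Finset.sum_div, Finset.sum_add_distrib]
  have ht0 : ∀ j, 0 ≤ t j := fun j => by
    rw [htdef j]; linarith [hp0 j, hq0 j]
  have ht1 : ∀ j, t j ≤ 1 := fun j => by
    rw [htdef j]; linarith [hp1 j, hq1 j]
  have htk : ∑ j, t j = k := by
    rw [Finset.sum_congr rfl (fun j (_ : j ∈ Finset.univ) => htdef j),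
      ← Finset.sum_div, Finset.sum_add_distrib]
    have h1 : ∑ j : Fin n, p j = (k : ℝ) := by
      rw [Finset.sum_congr rfl (fun j (_ : j ∈ Finset.univ) => hpdef j), Finset.sum_comm,
        Finset.sum_congr rfl (fun i (_ : i ∈ Finset.univ) => coef_parseval hu e i)]
      simp
    have h2 : ∑ j : Fin n, q j = (k : ℝ) := by
      rw [Finset.sum_congr rfl (fun j (_ : j ∈ Finset.univ) => hqdef j), Finset.sum_comm,
        Finset.sum_congr rfl (fun i (_ : i ∈ Finset.univ) => coef_parseval hv e i)]
      simp
    rw [h1, h2]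
    ring
  have hveq : ∑ j, lam j * r j
      = ∑ j ∈ Finset.univ.filter (fun j : Fin n => (j : ℕ) < k), lam j := by
    rw [← heq, val_expand A lam e e (mulVec_eframe A hA.isHermitian) u v]
  have hcore := core_eq_case hk1 hk lam t r (eigDesc_nonneg A hA)
    (eigDesc_antitone A hA.isHermitian) ht0 ht1 htk hrt hveq
  -- small eigenvalues: coefficients vanish
  have hsmall : ∀ j : Fin n, lam j < c → (∀ i, α i j = 0) ∧ (∀ i, β i j = 0) := by
    intro j hlt
    have hjk : ¬ (j : ℕ) < k := by
      intro hjk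
      have : c ≤ lam j := eigDesc_antitone A hA.isHermitian (by simp [Fin.le_def]; omega)
      linarith
    have h3 := (hcore j).2.2 hjk
    have htj : t j = 0 := by
      rcases mul_eq_zero.1 h3 with h | h
      · exfalso; linarith [sub_eq_zero.mp h]
      · exact h
    rw [htdef j] at htj
    have hpj : p j = 0 := by linarith [hp0 j, hq0 j]
    have hqj : q j = 0 := by linarith [hp0 j, hq0 j]
    rw [hpdef j] at hpj
    rw [hqdef j] at hqj
    constructor
    · intro i
      have := (Finset.sum_eq_zero_iff_of_nonneg
        (fun i (_ : i ∈ Finset.univ) => Complex.normSq_nonneg (α i j))).1 hpj i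
        (Finset.mem_univ i)
      exact Complex.normSq_eq_zero.mp this
    · intro i
      have := (Finset.sum_eq_zero_iff_of_nonneg
        (fun i (_ : i ∈ Finset.univ) => Complex.normSq_nonneg (β i j))).1 hqj i
        (Finset.mem_univ i)
      exact Complex.normSq_eq_zero.mp this
  -- α = β
  have hαβ : ∀ i j, α i j = β i j := by
    intro i j
    by_cases hlz : lam j = 0
    · have hlt : lam j < c := by rw [hlz]; exact hcpos
      rw [(hsmall j hlt).1 i, (hsmall j hlt).2 i]
    · have hlpos : 0 < lam j := lt_of_le_of_ne (eigDesc_nonneg A hA j) (Ne.symm hlz)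
      have h1 := (hcore j).1
      have htr : t j = r j := by
        rcases mul_eq_zero.1 h1 with h | h
        · exact absurd h (ne_of_gt hlpos)
        · linarith
      have hzero : ∑ i, Complex.normSq (α i j - β i j) = 0 := by
        have hexp : ∑ i, Complex.normSq (α i j - β i j)
            = p j + q j - 2 * r j := by
          rw [Finset.sum_congr rfl (fun i (_ : i ∈ Finset.univ) =>
            normSq_sub_identity (α i j) (β i j)), hpdef j, hqdef j, hrdef j]
          rw [Finset.sum_sub_distrib, Finset.sum_add_distrib, ← Finset.mul_sum]
          try ring
        rw [hexp]
        rw [htdef j] at htr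
        linarith
      have := (Finset.sum_eq_zero_iff_of_nonneg
        (fun l (_ : l ∈ Finset.univ) => Complex.normSq_nonneg (α l j - β l j))).1 hzero i
        (Finset.mem_univ i)
      have h5 := Complex.normSq_eq_zero.mp this
      exact sub_eq_zero.mp h5
  -- u = v
  have hrepru : ∀ (x : Fin k → Fin n → ℂ) (i : Fin k),
      (WithLp.equiv 2 (Fin n → ℂ)).symm (x i) = ∑ j, (coef e x i j) • e j := by
    intro x i
    have h1 := e.sum_repr' ((WithLp.equiv 2 (Fin n → ℂ)).symm (x i))
    rw [Finset.sum_congr rfl (fun j (_ : j ∈ Finset.univ) => by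
      rw [coef_inner e x i j])] at h1
    exact h1.symm
  have huv : u = v := by
    funext i
    have h1 := hrepru u i
    have h2 := hrepru v i
    have h4 : ∀ j, (coef e u i j) • e j = (coef e v i j) • e j := by
      intro j
      have h5 : coef e u i j = coef e v i j := hαβ i j
      rw [h5]
    rw [Finset.sum_congr rfl (fun j (_ : j ∈ Finset.univ) => h4 j)] at h1
    have h3 : (WithLp.equiv 2 (Fin n → ℂ)).symm (u i)
        = (WithLp.equiv 2 (Fin n → ℂ)).symm (v i) := by rw [h1, h2]
    exact (WithLp.equiv 2 (Fin n → ℂ)).symm.injective h3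
  -- the index m
  set m := (Finset.univ.filter (fun j : Fin n => c < lam j)).card with hm
  have hmn : m ≤ n := le_trans (Finset.card_filter_le _ _) (by simp)
  have hm_iff : ∀ j : Fin n, c < lam j ↔ (j : ℕ) < m := by
    intro j
    constructor
    · intro hcj
      have hsub : Finset.Iic j ⊆ Finset.univ.filter (fun j' : Fin n => c < lam j') := by
        intro j' hj'
        rw [Finset.mem_Iic] at hj'
        rw [Finset.mem_filter]
        exact ⟨Finset.mem_univ _, lt_of_lt_of_le hcj
          (eigDesc_antitone A hA.isHermitian hj')⟩
      have := Finset.card_le_card hsub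
      rw [Fin.card_Iic] at this
      omega
    · intro hj
      by_contra hcj
      push_neg at hcj
      have hsub : Finset.univ.filter (fun j' : Fin n => c < lam j') ⊆ Finset.Iio j := by
        intro j' hj'
        rw [Finset.mem_filter] at hj'
        rw [Finset.mem_Iio]
        by_contra hge
        push_neg at hge
        exact absurd (lt_of_le_of_lt hcj hj'.2)
          (not_lt.2 (eigDesc_antitone A hA.isHermitian hge))
      have := Finset.card_le_card hsub
      rw [Fin.card_Iio] at this
      omega
  have hmk : m < k := by
    by_contra hge
    push_neg at hge
    have h1 : ((⟨k - 1, Nat.sub_one_lt_of_le hk1 hk⟩ : Fin n) : ℕ) < m := by simp only [Fin.val_mk]; omega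
    have h2 := (hm_iff ⟨k - 1, Nat.sub_one_lt_of_le hk1 hk⟩).2 h1
    have h3 : lam (⟨k - 1, Nat.sub_one_lt_of_le hk1 hk⟩ : Fin n) = c := rfl
    rw [h3] at h2
    exact lt_irrefl c h2
  -- span membership of the top eigenvectors
  set uE : Fin k → Eu n := fun i => (WithLp.equiv 2 (Fin n → ℂ)).symm (u i) with huE
  set S := Submodule.span ℂ (Set.range uE) with hS
  have hONu : Orthonormal ℂ uE := onsys_orthonormal hu
  have heS : ∀ j : Fin n, (j : ℕ) < m → e j ∈ S := by
    intro j hjm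
    have hcj : c < lam j := (hm_iff j).2 hjm
    have hjk : (j : ℕ) < k := by omega
    have h2 := (hcore j).2.1 hjk
    have htj : t j = 1 := by
      rcases mul_eq_zero.1 h2 with h | h
      · exfalso; linarith [sub_eq_zero.mp h]
      · linarith
    rw [htdef j] at htj
    have hpj : p j = 1 := by
      linarith [hp1 j, hq1 j]
    apply mem_span_of_parseval hONu
    have hterm : ∀ i, Complex.normSq (inner (𝕜 := ℂ) (uE i) (e j)) = Complex.normSq (α i j) := by
      intro i
      rw [huE]
      simp only
      rw [← inner_conj_symm, coef_inner e u i j]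
      exact Complex.normSq_conj _
    rw [Finset.sum_congr rfl (fun i (_ : i ∈ Finset.univ) => hterm i)]
    have hnorm : ‖e j‖ = 1 := e.orthonormal.1 j
    rw [hnorm]
    rw [hpdef j] at hpj
    simpa using hpj
  -- dimensions
  have hfinS : Module.finrank ℂ S = k := by
    rw [hS, finrank_span_eq_card hONu.linearIndependent]
    simp
  set eU : Fin m → Eu n := fun j => e (Fin.castLE hmn j) with heU
  have hONeU : Orthonormal ℂ eU := e.orthonormal.comp _ (Fin.castLE_injective hmn)
  set U := Submodule.span ℂ (Set.range eU) with hU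
  have hfinU : Module.finrank ℂ U = m := by
    rw [hU, finrank_span_eq_card hONeU.linearIndependent]
    simp
  have hUS : U ≤ S := by
    rw [hU, Submodule.span_le]
    rintro x ⟨j, rfl⟩
    exact heS (Fin.castLE hmn j) j.2
  set S' := Uᗮ ⊓ S with hS'
  have hdim : m + Module.finrank ℂ S' = k := by
    have h1 := Submodule.finrank_add_inf_finrank_orthogonal hUS
    rw [hfinU, hfinS] at h1
    exact h1
  set b' := stdOrthonormalBasis ℂ S' with hb'
  have hmv : ∀ j, A *ᵥ ⇑(e j) = ((lam j : ℝ) : ℂ) • ⇑(e j) := by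
    intro j
    rw [he, hlam]
    exact mulVec_eframe A hA.isHermitian j
  set w : Fin k → Fin n → ℂ := fun i =>
    if h : (i : ℕ) < m then ⇑(e ⟨(i : ℕ), by omega⟩)
    else (WithLp.equiv 2 (Fin n → ℂ)) ((b' ⟨(i : ℕ) - m, by have := i.isLt; omega⟩ : S') : Eu n)
    with hw
  -- S' elements are eigenvectors with eigenvalue c
  have hSeig : ∀ x : Eu n, x ∈ S' →
      A *ᵥ ((WithLp.equiv 2 (Fin n → ℂ)) x) = ((c : ℝ) : ℂ) • ((WithLp.equiv 2 (Fin n → ℂ)) x) := by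
    intro x hx
    obtain ⟨hxU, hxS⟩ := Submodule.mem_inf.1 hx
    have hcoef0 : ∀ j : Fin n, lam j ≠ c → (inner (𝕜 := ℂ) (e j) x) = 0 := by
      intro j hne
      rcases lt_or_gt_of_ne hne with hlt | hgt
      · obtain ⟨d, hd⟩ := (Submodule.mem_span_range_iff_exists_fun ℂ).1 hxS
        rw [← hd, inner_sum]
        refine Finset.sum_eq_zero fun i _ => ?_
        rw [inner_smul_right]
        have h6 : (inner (𝕜 := ℂ) (e j) (uE i)) = α i j := coef_inner e u i j
        rw [h6, (hsmall j hlt).1 i, mul_zero]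
      · have hjm : (j : ℕ) < m := (hm_iff j).1 hgt
        have hU1 : e j ∈ U := by
          apply Submodule.subset_span
          exact ⟨⟨(j : ℕ), hjm⟩, by rw [heU]; exact congrArg e (Fin.ext rfl)⟩
        exact Submodule.inner_right_of_mem_orthogonal hU1 hxU
    have hxrep : (WithLp.equiv 2 (Fin n → ℂ)) x
        = ∑ j, (inner (𝕜 := ℂ) (e j) x) • (⇑(e j) : Fin n → ℂ) := by
      conv_lhs => rw [← e.sum_repr' x]
      simp [WithLp.ofLp_sum, WithLp.ofLp_smul]
    rw [hxrep, mulVec_sumr]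
    have hterm : ∀ j, A *ᵥ ((inner (𝕜 := ℂ) (e j) x) • (⇑(e j) : Fin n → ℂ))
        = ((c : ℝ) : ℂ) • ((inner (𝕜 := ℂ) (e j) x) • (⇑(e j) : Fin n → ℂ)) := by
      intro j
      rw [Matrix.mulVec_smul]
      by_cases hne : lam j = c
      · rw [hmv j, hne, smul_comm]
      · rw [hcoef0 j hne]
        simp
    rw [Finset.sum_congr rfl (fun j (_ : j ∈ Finset.univ) => hterm j), ← Finset.smul_sum]
  -- lam at castLE for the second branch
  have hlc : ∀ i : Fin k, ¬ (i : ℕ) < m → lam (Fin.castLE hk i) = c := by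
    intro i hi
    have h1 : ¬ c < lam (Fin.castLE hk i) := fun hlt => hi (by simpa using (hm_iff _).1 hlt)
    have h2 : c ≤ lam (Fin.castLE hk i) := by
      have hle : (Fin.castLE hk i) ≤ (⟨k - 1, Nat.sub_one_lt_of_le hk1 hk⟩ : Fin n) := by
        simp only [Fin.le_def, Fin.coe_castLE, Fin.val_mk]
        have := i.isLt
        omega
      exact eigDesc_antitone A hA.isHermitian hle
    exact le_antisymm (not_lt.1 h1) h2
  -- orthonormality of w
  have hwON : ONSys w := by
    intro i j
    rw [show star (w i) ⬝ᵥ w j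
        = (inner (𝕜 := ℂ) ((WithLp.equiv 2 (Fin n → ℂ)).symm (w i))
            ((WithLp.equiv 2 (Fin n → ℂ)).symm (w j)))
      from (inner_equiv_symm _ _).symm]
    by_cases hi : (i : ℕ) < m <;> by_cases hj : (j : ℕ) < m <;>
      simp only [hw, dif_pos, dif_neg, hi, hj, dite_true, dite_false,
        Equiv.symm_apply_apply, WithLp.equiv_symm_apply, WithLp.equiv_apply, WithLp.toLp_ofLp]
    · have h1 := orthonormal_iff_ite.mp e.orthonormal
        ⟨(i : ℕ), by omega⟩ ⟨(j : ℕ), by omega⟩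
      rw [h1]
      by_cases hij : i = j
      · simp [hij]
      · have hne : (⟨(i : ℕ), by omega⟩ : Fin n) ≠ ⟨(j : ℕ), by omega⟩ := by
          intro hcon
          apply hij
          apply Fin.ext
          have hv := congrArg Fin.val hcon
          simpa using hv
        simp [hne, hij]
    · have hU1 : e ⟨(i : ℕ), by omega⟩ ∈ U := by
        apply Submodule.subset_span
        exact ⟨⟨(i : ℕ), hi⟩, by rw [heU]; exact congrArg e (Fin.ext rfl)⟩
      have hO : (((b' ⟨(j : ℕ) - m, by have := j.isLt; omega⟩ : S') : Eu n)) ∈ Uᗮ :=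
        (Submodule.mem_inf.1 (b' _).2).1
      rw [Submodule.inner_right_of_mem_orthogonal hU1 hO]
      have hij : i ≠ j := fun hcon => hj (hcon ▸ hi)
      simp [hij]
    · have hU1 : e ⟨(j : ℕ), by omega⟩ ∈ U := by
        apply Submodule.subset_span
        exact ⟨⟨(j : ℕ), hj⟩, by rw [heU]; exact congrArg e (Fin.ext rfl)⟩
      have hO : (((b' ⟨(i : ℕ) - m, by have := i.isLt; omega⟩ : S') : Eu n)) ∈ Uᗮ :=
        (Submodule.mem_inf.1 (b' _).2).1
      rw [Submodule.inner_left_of_mem_orthogonal hU1 hO]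
      have hij : i ≠ j := fun hcon => hi (hcon ▸ hj)
      simp [hij]
    · rw [← Submodule.coe_inner]
      rw [orthonormal_iff_ite.mp b'.orthonormal]
      have hidx : ((⟨(i : ℕ) - m, by have := i.isLt; omega⟩ : Fin (Module.finrank ℂ S'))
          = ⟨(j : ℕ) - m, by have := j.isLt; omega⟩) ↔ i = j := by
        constructor
        · intro hcon
          have := congrArg Fin.val hcon
          simp only [Fin.val_mk] at this
          exact Fin.ext (by omega)
        · intro hcon; subst hcon; rfl
      by_cases hij : i = j
      · simp [hidx, hij]
      · have : ¬ ((⟨(i : ℕ) - m, by have := i.isLt; omega⟩ : Fin (Module.finrank ℂ S'))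
            = ⟨(j : ℕ) - m, by have := j.isLt; omega⟩) := fun hcon => hij (hidx.1 hcon)
        simp [this, hij]
  -- eigen property of w
  have hweig : ∀ i : Fin k, A *ᵥ w i = ((lam (Fin.castLE hk i) : ℝ) : ℂ) • w i := by
    intro i
    by_cases hi : (i : ℕ) < m
    · simp only [hw, dif_pos, hi, dite_true]
      have h2 : lam (Fin.castLE hk i) = lam ⟨(i : ℕ), by omega⟩ := congrArg lam (Fin.ext rfl)
      rw [h2]
      exact hmv _
    · simp only [hw, dif_neg, hi, dite_false]
      rw [hlc i hi]
      exact hSeig ((b' ⟨(i : ℕ) - m, by have := i.isLt; omega⟩ : S') : Eu n)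
        (b' ⟨(i : ℕ) - m, by have := i.isLt; omega⟩).2
  -- membership in S
  have hwmem : ∀ i : Fin k, (WithLp.equiv 2 (Fin n → ℂ)).symm (w i) ∈ S := by
    intro i
    by_cases hi : (i : ℕ) < m
    · simp only [hw, dif_pos, hi, dite_true, Equiv.symm_apply_apply, WithLp.equiv_symm_apply, WithLp.equiv_apply, WithLp.toLp_ofLp]
      exact heS _ hi
    · simp only [hw, dif_neg, hi, dite_false, Equiv.symm_apply_apply, WithLp.equiv_symm_apply, WithLp.equiv_apply, WithLp.toLp_ofLp]
      exact (Submodule.mem_inf.1 (b' _).2).2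
  refine ⟨w, hwON, hweig, ?_⟩
  have hfinal : val X w w = val X u u := val_eq_of_span X hu hwON hwmem
  rw [← huv]
  exact hfinal

lemma val_add_smul {n k : ℕ} (A X : Matrix (Fin n) (Fin n) ℂ) (s : ℝ)
    (u v : Fin k → Fin n → ℂ) :
    val (A + (s : ℂ) • X) u v = val A u v + s * val X u v := by
  rw [val, val, val]
  have hterm : ∀ i, (star (u i) ⬝ᵥ ((A + (s : ℂ) • X) *ᵥ v i)).re
      = (star (u i) ⬝ᵥ (A *ᵥ v i)).re + s * (star (u i) ⬝ᵥ (X *ᵥ v i)).re := by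
    intro i
    rw [Matrix.add_mulVec, dotProduct_add, Matrix.smul_mulVec,
      dotProduct_smul]
    rw [Complex.add_re]
    congr 1
    rw [smul_eq_mul, Complex.re_ofReal_mul]
  rw [Finset.sum_congr rfl (fun i (_ : i ∈ Finset.univ) => hterm i), Finset.sum_add_distrib,
    ← Finset.mul_sum]

lemma val_eigen {n k : ℕ} (hk1 : 1 ≤ k) (hk : k ≤ n) (A : Matrix (Fin n) (Fin n) ℂ)
    (lam : Fin n → ℝ) {w : Fin k → Fin n → ℂ} (hw : ONSys w)
    (heig : ∀ i : Fin k, A *ᵥ w i = ((lam (Fin.castLE hk i) : ℝ) : ℂ) • w i) :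
    val A w w = ∑ j ∈ Finset.univ.filter (fun j : Fin n => (j : ℕ) < k), lam j := by
  rw [val]
  have hterm : ∀ i, (star (w i) ⬝ᵥ (A *ᵥ w i)).re = lam (Fin.castLE hk i) := by
    intro i
    rw [heig i, dotProduct_smul, hw i i]
    simp
  rw [Finset.sum_congr rfl (fun i (_ : i ∈ Finset.univ) => hterm i),
    sum_filter_lt_eq hk lam]

lemma val_continuous {n k : ℕ} (M : Matrix (Fin n) (Fin n) ℂ) :
    Continuous (fun uv : (Fin k → Fin n → ℂ) × (Fin k → Fin n → ℂ) => val M uv.1 uv.2) := by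
  have : (fun uv : (Fin k → Fin n → ℂ) × (Fin k → Fin n → ℂ) => val M uv.1 uv.2)
      = fun uv => ∑ i, (∑ l, (starRingEnd ℂ) (uv.1 i l) * (∑ mm, M l mm * uv.2 i mm)).re := by
    funext uv
    rw [val]
    refine Finset.sum_congr rfl fun i _ => ?_
    congr 1
  rw [this]
  refine continuous_finset_sum _ fun i _ => ?_
  refine Complex.continuous_re.comp ?_
  refine continuous_finset_sum _ fun l _ => ?_
  refine Continuous.mul ?_ ?_
  · exact Complex.continuous_conj.comp
      ((continuous_apply l).comp ((continuous_apply i).comp continuous_fst))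
  · refine continuous_finset_sum _ fun mm _ => ?_
    exact continuous_const.mul
      ((continuous_apply mm).comp ((continuous_apply i).comp continuous_snd))

lemma onsys_norm_le {n k : ℕ} {u : Fin k → Fin n → ℂ} (hu : ONSys u) : ‖u‖ ≤ 1 := by
  rw [pi_norm_le_iff_of_nonneg (by norm_num)]
  intro i
  rw [pi_norm_le_iff_of_nonneg (by norm_num)]
  intro l
  have h1 : (star (u i) ⬝ᵥ u i) = ((∑ m, Complex.normSq (u i m) : ℝ) : ℂ) := by
    rw [dotProduct]
    push_cast
    refine Finset.sum_congr rfl fun m _ => ?_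
    simp only [Pi.star_apply, RCLike.star_def]
    rw [Complex.normSq_eq_conj_mul_self]
  have h2 : (∑ m, Complex.normSq (u i m) : ℝ) = 1 := by
    have := hu i i
    rw [h1, if_pos rfl] at this
    exact_mod_cast this
  have h3 : Complex.normSq (u i l) ≤ 1 := by
    rw [← h2]
    exact Finset.single_le_sum (f := fun m => Complex.normSq (u i m))
      (fun m _ => Complex.normSq_nonneg _) (Finset.mem_univ l)
  rw [show ‖u i l‖ = Real.sqrt (Complex.normSq (u i l)) by
    rw [Complex.norm_def]]
  rw [show (1 : ℝ) = Real.sqrt 1 by rw [Real.sqrt_one]]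
  exact Real.sqrt_le_sqrt h3

lemma onpairs_compact {n k : ℕ} :
    IsCompact {uv : (Fin k → Fin n → ℂ) × (Fin k → Fin n → ℂ) | ONSys uv.1 ∧ ONSys uv.2} := by
  apply Metric.isCompact_of_isClosed_isBounded
  · have h1 : ∀ (w : Fin k → Fin n → ℂ) (i j : Fin k),
        Continuous (fun uv : (Fin k → Fin n → ℂ) × (Fin k → Fin n → ℂ) => uv) := fun _ _ _ =>
      continuous_id
    have hdot : ∀ (pr : ((Fin k → Fin n → ℂ) × (Fin k → Fin n → ℂ)) → (Fin k → Fin n → ℂ))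
        (hpr : Continuous pr) (i j : Fin k),
        IsClosed {uv : (Fin k → Fin n → ℂ) × (Fin k → Fin n → ℂ) |
          star (pr uv i) ⬝ᵥ pr uv j = if i = j then 1 else 0} := by
      intro pr hpr i j
      apply isClosed_eq _ continuous_const
      refine continuous_finset_sum _ fun l _ => ?_
      refine Continuous.mul ?_ ?_
      · exact Complex.continuous_conj.comp
          ((continuous_apply l).comp ((continuous_apply i).comp hpr))
      · exact (continuous_apply l).comp ((continuous_apply j).comp hpr)
    have : {uv : (Fin k → Fin n → ℂ) × (Fin k → Fin n → ℂ) | ONSys uv.1 ∧ ONSys uv.2}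
        = (⋂ i, ⋂ j, {uv | star (uv.1 i) ⬝ᵥ uv.1 j = if i = j then 1 else 0})
          ∩ (⋂ i, ⋂ j, {uv | star (uv.2 i) ⬝ᵥ uv.2 j = if i = j then 1 else 0}) := by
      ext uv
      simp only [Set.mem_setOf_eq, Set.mem_inter_iff, Set.mem_iInter]
      rfl
    rw [this]
    exact IsClosed.inter
      (isClosed_iInter fun i => isClosed_iInter fun j => hdot Prod.fst continuous_fst i j)
      (isClosed_iInter fun i => isClosed_iInter fun j => hdot Prod.snd continuous_snd i j)
  · rw [Metric.isBounded_iff_subset_closedBall 0]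
    refine ⟨1, ?_⟩
    rintro ⟨u, v⟩ ⟨hu, hv⟩
    rw [Metric.mem_closedBall, dist_zero_right]
    rw [Prod.norm_def]
    exact max_le (onsys_norm_le hu) (onsys_norm_le hv)

end KF

open KF in
set_option maxHeartbeats 1000000 in
theorem stmt7 {n k : ℕ} (hk1 : 1 ≤ k) (hk : k ≤ n)
    (A : Matrix (Fin n) (Fin n) ℂ) (hA : A.PosSemidef)
    (hpos : 0 < eigDesc A hA.isHermitian ⟨k - 1, by omega⟩) (X : Matrix (Fin n) (Fin n) ℂ) :
    ∃ d : ℝ,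
      IsGreatest {x : ℝ | ∃ u : Fin k → Fin n → ℂ, ONSys u ∧
          (∀ i : Fin k, A *ᵥ u i = (eigDesc A hA.isHermitian (Fin.castLE hk i) : ℂ) • u i) ∧
          x = ∑ i, (star (u i) ⬝ᵥ (X *ᵥ u i)).re} d ∧
      Filter.Tendsto (fun t : ℝ => (kyFan k (A + (t : ℂ) • X) - kyFan k A) / t)
        (nhdsWithin 0 (Set.Ioi 0)) (nhds d) := by
  classical
  have hlam := eigDesc_nonneg A hA
  set K : ℝ := ∑ j ∈ Finset.univ.filter (fun j : Fin n => (j : ℕ) < k),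
    eigDesc A hA.isHermitian j with hK
  -- base eigen system
  set u0 : Fin k → Fin n → ℂ :=
    fun i => ⇑(eframe A hA.isHermitian (Fin.castLE hk i)) with hu0
  have hON0 : ONSys u0 := onsys_of_basis hk (eframe A hA.isHermitian)
  have heig0 : ∀ i : Fin k, A *ᵥ u0 i
      = ((eigDesc A hA.isHermitian (Fin.castLE hk i) : ℝ) : ℂ) • u0 i := fun i =>
    mulVec_eframe A hA.isHermitian _
  have hvalA0 : val A u0 u0 = K := val_eigen hk1 hk A _ hON0 heig0
  -- kyFan A = K
  have hg0 : kyFan k A = K := by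
    obtain ⟨ua, va, hua, hva, hval⟩ := exists_attain hk1 hk A
    have h1 : kyFan k A ≤ K := by
      rw [← hval, hK]; exact herm_val_le hk1 hk A hA hua hva
    have h2 : K ≤ kyFan k A := by
      rw [← hvalA0]; exact val_le_kyFan hk1 hk A hON0 hON0
    linarith
  -- maximizers for each s
  have hall : ∀ s : ℝ, ∃ uvp : (Fin k → Fin n → ℂ) × (Fin k → Fin n → ℂ),
      ONSys uvp.1 ∧ ONSys uvp.2 ∧
        val (A + (s : ℂ) • X) uvp.1 uvp.2 = kyFan k (A + (s : ℂ) • X) := by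
    intro s
    obtain ⟨u, v, h1, h2, h3⟩ := exists_attain hk1 hk (A + (s : ℂ) • X)
    exact ⟨(u, v), h1, h2, h3⟩
  choose P hP1 hP2 hP3 using hall
  set g : ℝ → ℝ := fun s => kyFan k (A + (s : ℂ) • X) with hg
  set Q : ℝ → ℝ := fun s => (g s - kyFan k A) / s with hQdef
  have hPa_le : ∀ s, val A (P s).1 (P s).2 ≤ K := fun s => by
    rw [← hg0]; exact val_le_kyFan hk1 hk A (hP1 s) (hP2 s)
  have hgs : ∀ s, g s = val A (P s).1 (P s).2 + s * val X (P s).1 (P s).2 := fun s => by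
    rw [hg]; simp only; rw [← hP3 s, val_add_smul]
  have hlow : ∀ s : ℝ, K + s * val X u0 u0 ≤ g s := fun s => by
    have h1 := val_le_kyFan hk1 hk (A + (s : ℂ) • X) hON0 hON0
    rw [val_add_smul, hvalA0] at h1
    exact h1
  have hgen : ∀ (s : ℝ) {u v : Fin k → Fin n → ℂ}, ONSys u → ONSys v →
      val A u v + s * val X u v ≤ g s := by
    intro s u v hu hv
    have h1 := val_le_kyFan hk1 hk (A + (s : ℂ) • X) hu hv
    rw [val_add_smul] at h1
    exact h1
  have hQs : ∀ s : ℝ, s ≠ 0 →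
      Q s = (val A (P s).1 (P s).2 - K) / s + val X (P s).1 (P s).2 := by
    intro s hs
    rw [hQdef]
    simp only
    rw [hgs s, hg0]
    field_simp
    ring
  -- monotonicity of Q on Ioi 0
  have hQmono : MonotoneOn Q (Set.Ioi (0 : ℝ)) := by
    rintro s hs t ht hst
    have hs' : (0 : ℝ) < s := hs
    have ht' : (0 : ℝ) < t := ht
    have h1 := hQs s (ne_of_gt hs')
    have h2 : (val A (P s).1 (P s).2 - K) / t + val X (P s).1 (P s).2 ≤ Q t := by
      rw [hQdef]
      simp only
      rw [hg0]
      rw [div_add' _ _ _ (ne_of_gt ht'), div_le_div_iff₀ ht' ht']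
      have h3 := hgen t (hP1 s) (hP2 s)
      nlinarith
    have h4 : (val A (P s).1 (P s).2 - K) / s ≤ (val A (P s).1 (P s).2 - K) / t := by
      rw [div_le_div_iff₀ hs' ht']
      have h5 : val A (P s).1 (P s).2 - K ≤ 0 := by linarith [hPa_le s]
      nlinarith
    linarith
  have hQbdd : BddBelow (Q '' Set.Ioi 0) := by
    refine ⟨val X u0 u0, ?_⟩
    rintro x ⟨s, hs, rfl⟩
    have hs' : (0 : ℝ) < s := hs
    rw [hQdef]
    simp only
    rw [hg0, le_div_iff₀ hs']
    have := hlow s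
    nlinarith
  set d := sInf (Q '' Set.Ioi 0) with hd
  have htend : Filter.Tendsto Q (nhdsWithin 0 (Set.Ioi 0)) (nhds d) :=
    MonotoneOn.tendsto_nhdsGT hQmono hQbdd
  -- upper bound property
  have hub : ∀ x ∈ {x : ℝ | ∃ u : Fin k → Fin n → ℂ, ONSys u ∧
      (∀ i : Fin k, A *ᵥ u i = (eigDesc A hA.isHermitian (Fin.castLE hk i) : ℂ) • u i) ∧
      x = ∑ i, (star (u i) ⬝ᵥ (X *ᵥ u i)).re}, x ≤ d := by
    rintro x ⟨wv, hwON, hweig, rfl⟩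
    show val X wv wv ≤ d
    have hAval : val A wv wv = K := val_eigen hk1 hk A _ hwON hweig
    have hle : ∀ s ∈ Set.Ioi (0 : ℝ), val X wv wv ≤ Q s := by
      intro s hs
      have hs' : (0 : ℝ) < s := hs
      have h1 := hgen s hwON hwON
      rw [hAval] at h1
      rw [hQdef]
      simp only
      rw [hg0, le_div_iff₀ hs']
      nlinarith
    refine le_csInf ⟨Q 1, ⟨1, by norm_num, rfl⟩⟩ ?_
    rintro y ⟨s, hs, rfl⟩
    exact hle s hs
  -- the sequence of maximizers
  set sseq : ℕ → ℝ := fun j => 1 / ((j : ℝ) + 1) with hsseq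
  have hspos : ∀ j, 0 < sseq j := fun j => by rw [hsseq]; positivity
  have hstend0 : Filter.Tendsto sseq Filter.atTop (nhds 0) := by
    rw [hsseq]; exact tendsto_one_div_add_atTop_nhds_zero_nat
  obtain ⟨uv, huvK, φ, hφmono, hφtend⟩ := onpairs_compact.tendsto_subseq
    (x := fun j => P (sseq j)) (fun j => ⟨hP1 _, hP2 _⟩)
  obtain ⟨hONu, hONv⟩ := huvK
  have hsφ0 : Filter.Tendsto (fun j => sseq (φ j)) Filter.atTop (nhds 0) :=
    hstend0.comp hφmono.tendsto_atTop
  have hbtend : Filter.Tendsto (fun j => val X (P (sseq (φ j))).1 (P (sseq (φ j))).2)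
      Filter.atTop (nhds (val X uv.1 uv.2)) :=
    ((val_continuous X).tendsto uv).comp hφtend
  have hatend : Filter.Tendsto (fun j => val A (P (sseq (φ j))).1 (P (sseq (φ j))).2)
      Filter.atTop (nhds (val A uv.1 uv.2)) :=
    ((val_continuous A).tendsto uv).comp hφtend
  -- val A at the limit is K
  have haK : val A uv.1 uv.2 = K := by
    have hup : ∀ j, val A (P (sseq (φ j))).1 (P (sseq (φ j))).2 ≤ K := fun j => hPa_le _
    have hlo : ∀ j, K + sseq (φ j) * (val X u0 u0 - val X (P (sseq (φ j))).1 (P (sseq (φ j))).2)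
        ≤ val A (P (sseq (φ j))).1 (P (sseq (φ j))).2 := by
      intro j
      have h1 := hlow (sseq (φ j))
      have h2 := hgs (sseq (φ j))
      nlinarith [hspos (φ j)]
    have hliml : Filter.Tendsto
        (fun j => K + sseq (φ j) * (val X u0 u0 - val X (P (sseq (φ j))).1 (P (sseq (φ j))).2))
        Filter.atTop (nhds K) := by
      have h3 : Filter.Tendsto
          (fun j => sseq (φ j) * (val X u0 u0 - val X (P (sseq (φ j))).1 (P (sseq (φ j))).2))
          Filter.atTop (nhds (0 * (val X u0 u0 - val X uv.1 uv.2))) :=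
        hsφ0.mul (Filter.Tendsto.sub tendsto_const_nhds hbtend)
      rw [zero_mul] at h3
      simpa using (tendsto_const_nhds (x := K) (f := Filter.atTop (α := ℕ))).add h3
    exact le_antisymm (le_of_tendsto hatend (Filter.Eventually.of_forall hup))
      (le_of_tendsto_of_tendsto' hliml hatend hlo)
  -- d ≤ val X uv
  have hQle : ∀ j, Q (sseq (φ j)) ≤ val X (P (sseq (φ j))).1 (P (sseq (φ j))).2 := by
    intro j
    have hs' := hspos (φ j)
    rw [hQs _ (ne_of_gt hs')]
    have h5 : val A (P (sseq (φ j))).1 (P (sseq (φ j))).2 - K ≤ 0 := by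
      linarith [hPa_le (sseq (φ j))]
    have h6 : (val A (P (sseq (φ j))).1 (P (sseq (φ j))).2 - K) / sseq (φ j) ≤ 0 :=
      div_nonpos_of_nonpos_of_nonneg h5 (le_of_lt hs')
    linarith
  have hstendIoi : Filter.Tendsto (fun j => sseq (φ j)) Filter.atTop
      (nhdsWithin 0 (Set.Ioi 0)) := by
    rw [tendsto_nhdsWithin_iff]
    exact ⟨hsφ0, Filter.Eventually.of_forall fun j => hspos (φ j)⟩
  have hQtend : Filter.Tendsto (fun j => Q (sseq (φ j))) Filter.atTop (nhds d) :=
    htend.comp hstendIoi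
  have hdbb : d ≤ val X uv.1 uv.2 := le_of_tendsto_of_tendsto' hQtend hbtend hQle
  -- equality case gives a maximizing eigen system
  obtain ⟨w, hwON, hweig, hwval⟩ := equality_case hk1 hk A hA hpos X hONu hONv (by rw [haK, hK])
  have hmem : val X uv.1 uv.2 ∈ {x : ℝ | ∃ u : Fin k → Fin n → ℂ, ONSys u ∧
      (∀ i : Fin k, A *ᵥ u i = (eigDesc A hA.isHermitian (Fin.castLE hk i) : ℂ) • u i) ∧
      x = ∑ i, (star (u i) ⬝ᵥ (X *ᵥ u i)).re} :=
    ⟨w, hwON, hweig, hwval.symm⟩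
  have hle2 : val X uv.1 uv.2 ≤ d := hub _ hmem
  have hdeq : d = val X uv.1 uv.2 := le_antisymm hdbb hle2
  exact ⟨d, ⟨hdeq ▸ hmem, hub⟩, htend⟩
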